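/- For the 2×2 matrix L_t = [[1, 2t],[0, -1]] with t > 0, the Davis–Wielandt shell DW_BCK(L_t) = {((2Re⟨Ax,x⟩)/(‖Ax‖²+‖x‖²), (2Im⟨Ax,x⟩)/(‖Ax‖²+‖x‖²), (‖Ax‖²-‖x‖²)/(‖Ax‖²+‖x‖²)) : x ≠ 0} equals the ellipsoid surface {(x,y,z) : x² + ((1+t²)/t²)(y² + z²) = 1}. -/

import Mathlib

set_option maxHeartbeats 1000000

open Complex

lemma euclid_norm_sq (v : EuclideanSpace ℂ (Fin 2)) :
    ‖v‖ ^ 2 = Complex.normSq (v 0) + Complex.normSq (v 1) := by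
  rw [EuclideanSpace.norm_eq, Real.sq_sqrt (by positivity)]
  simp [Fin.sum_univ_two, Complex.sq_norm]

lemma toEuc_apply (t : ℝ) (v : EuclideanSpace ℂ (Fin 2)) :
    Matrix.toEuclideanLin !![(1:ℂ), 2*t; 0, -1] v =
      (WithLp.equiv 2 (Fin 2 → ℂ)).symm ![v 0 + 2*t*v 1, -v 1] := by
  rw [Matrix.toEuclideanLin_apply]
  congr 1
  funext i
  fin_cases i <;>
    simp [Matrix.mulVec, dotProduct, Fin.sum_univ_two, Matrix.vecHead, Matrix.vecTail,
      WithLp.equiv_symm_apply, PiLp.toLp_apply]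

lemma inner_two (v w : EuclideanSpace ℂ (Fin 2)) :
    (inner ℂ v w : ℂ) = (starRingEnd ℂ) (v 0) * w 0 + (starRingEnd ℂ) (v 1) * w 1 := by
  simp [PiLp.inner_apply, Fin.sum_univ_two, RCLike.inner_apply]
  ring

lemma forward_id (t ar ai br bi : ℝ) (ht : t ≠ 0)
    (hD : ((ar + 2*t*br)^2 + (ai + 2*t*bi)^2 + (br^2 + bi^2) + (ar^2 + ai^2 + br^2+bi^2)) ≠ 0) :
    (2 * (ar^2+ai^2-br^2-bi^2+2*t*(ar*br+ai*bi)) /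
      ((ar + 2*t*br)^2 + (ai + 2*t*bi)^2 + (br^2 + bi^2) + (ar^2 + ai^2 + br^2+bi^2))) ^ 2 +
    ((1+t^2)/t^2) * ((2 * (2*t*(ar*bi-ai*br)) /
      ((ar + 2*t*br)^2 + (ai + 2*t*bi)^2 + (br^2 + bi^2) + (ar^2 + ai^2 + br^2+bi^2)))^2 +
     (((ar + 2*t*br)^2 + (ai + 2*t*bi)^2 + (br^2 + bi^2) - (ar^2 + ai^2 + br^2+bi^2)) /
      ((ar + 2*t*br)^2 + (ai + 2*t*bi)^2 + (br^2 + bi^2) + (ar^2 + ai^2 + br^2+bi^2)))^2) = 1 := by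
  rw [div_pow, div_pow, div_pow, ← add_div, mul_div_assoc', ← add_div,
    div_eq_one_iff_eq (pow_ne_zero 2 hD)]
  field_simp
  ring

/-- The Davis–Wielandt shell in the BCK model. -/
noncomputable def DWshell (A : Matrix (Fin 2) (Fin 2) ℂ) : Set (ℝ × ℝ × ℝ) :=
  {p : ℝ × ℝ × ℝ | ∃ x : EuclideanSpace ℂ (Fin 2), x ≠ 0 ∧
      p = (2 * (inner ℂ x (Matrix.toEuclideanLin A x) : ℂ).re /
            (‖Matrix.toEuclideanLin A x‖ ^ 2 + ‖x‖ ^ 2),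
           2 * (inner ℂ x (Matrix.toEuclideanLin A x) : ℂ).im /
            (‖Matrix.toEuclideanLin A x‖ ^ 2 + ‖x‖ ^ 2),
           (‖Matrix.toEuclideanLin A x‖ ^ 2 - ‖x‖ ^ 2) /
            (‖Matrix.toEuclideanLin A x‖ ^ 2 + ‖x‖ ^ 2))}

theorem DWshell_Lt (t : ℝ) (ht : 0 < t) :
    DWshell !![(1 : ℂ), 2 * t; 0, -1] =
      {p : ℝ × ℝ × ℝ |
        p.1 ^ 2 + ((1 + t ^ 2) / t ^ 2) * (p.2.1 ^ 2 + p.2.2 ^ 2) = 1} := by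
  have ht' : t ≠ 0 := ht.ne'
  ext ⟨X, Y, Z⟩
  simp only [DWshell, Set.mem_setOf_eq]
  constructor
  · rintro ⟨v, hv, hp⟩
    rw [Prod.mk.injEq, Prod.mk.injEq] at hp
    obtain ⟨h1, h2, h3⟩ := hp
    set ar := (v 0).re with har
    set ai := (v 0).im with hai
    set br := (v 1).re with hbr
    set bi := (v 1).im with hbi
    have hN1 : ‖Matrix.toEuclideanLin !![(1:ℂ), 2*t; 0, -1] v‖ ^ 2 =
        (ar + 2*t*br)^2 + (ai + 2*t*bi)^2 + (br^2 + bi^2) := by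
      rw [toEuc_apply, euclid_norm_sq]
      simp only [WithLp.equiv_symm_apply, PiLp.toLp_apply, Matrix.cons_val_zero, Matrix.cons_val_one,
        Matrix.head_cons, Complex.normSq_apply, Complex.add_re, Complex.add_im, Complex.mul_re,
        Complex.mul_im, Complex.neg_re, Complex.neg_im, Complex.ofReal_re, Complex.ofReal_im,
        Complex.re_ofNat, Complex.im_ofNat]
      ring
    have hN2 : ‖v‖ ^ 2 = ar^2 + ai^2 + br^2 + bi^2 := by
      rw [euclid_norm_sq]
      simp only [Complex.normSq_apply]
      ring
    have hin : (inner ℂ v (Matrix.toEuclideanLin !![(1:ℂ), 2*t; 0, -1] v) : ℂ) =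
        (starRingEnd ℂ) (v 0) * (v 0 + 2*t*v 1) + (starRingEnd ℂ) (v 1) * (-(v 1)) := by
      rw [toEuc_apply, inner_two]
      simp
    have hP : (inner ℂ v (Matrix.toEuclideanLin !![(1:ℂ), 2*t; 0, -1] v) : ℂ).re =
        ar^2+ai^2-br^2-bi^2+2*t*(ar*br+ai*bi) := by
      rw [hin]
      simp only [Complex.add_re, Complex.mul_re, Complex.mul_im, Complex.conj_re,
        Complex.conj_im, Complex.neg_re, Complex.neg_im, Complex.add_im, Complex.ofReal_re,
        Complex.ofReal_im, Complex.re_ofNat, Complex.im_ofNat]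
      ring
    have hQ : (inner ℂ v (Matrix.toEuclideanLin !![(1:ℂ), 2*t; 0, -1] v) : ℂ).im =
        2*t*(ar*bi-ai*br) := by
      rw [hin]
      simp only [Complex.add_re, Complex.mul_re, Complex.mul_im, Complex.conj_re,
        Complex.conj_im, Complex.neg_re, Complex.neg_im, Complex.add_im, Complex.ofReal_re,
        Complex.ofReal_im, Complex.re_ofNat, Complex.im_ofNat]
      ring
    have hvn : (0:ℝ) < ar^2 + ai^2 + br^2 + bi^2 := by
      rw [← hN2]
      have := norm_pos_iff.mpr hv
      positivity
    have hD : ((ar + 2*t*br)^2 + (ai + 2*t*bi)^2 + (br^2 + bi^2) + (ar^2 + ai^2 + br^2+bi^2)) ≠ 0 := by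
      positivity
    rw [hN1, hN2] at h1 h2 h3
    rw [hP] at h1
    rw [hQ] at h2
    rw [h1, h2, h3]
    have := forward_id t ar ai br bi ht' hD
    convert this using 3 <;> ring
  · intro hE
    have h1t : (0:ℝ) < 1 + t^2 := by positivity
    have hE' : t^2*X^2 + (1+t^2)*(Y^2+Z^2) = t^2 := by
      have h := hE
      field_simp at h
      linarith
    have hZ2 : Z^2 < 1 := by nlinarith [mul_pos ht ht, sq_nonneg X, sq_nonneg Y]
    have hZ : Z < 1 := by nlinarith [sq_nonneg (Z-1)]
    have hZ1 : (0:ℝ) < 1 - Z := by linarith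
    set α : ℝ := 1 - (1-X)/((1+t^2)*(1-Z)) with hα
    set β : ℝ := (X/(1-Z) - α)/t with hβ
    set γ : ℝ := Y/(t*(1-Z)) with hγ
    have hsph' : ((1+t^2)*(1-Z))^2 * t^2 * (α^2 + β^2 + γ^2 - 1) =
        (1+t^2) * (t^2*X^2 + (1+t^2)*(Y^2+Z^2) - t^2) := by
      rw [hβ, hγ, hα]
      field_simp
      ring
    have hsph : α^2 + β^2 + γ^2 = 1 := by
      have hne : ((1+t^2)*(1-Z))^2 * t^2 ≠ 0 := by positivity
      have h0 : ((1+t^2)*(1-Z))^2 * t^2 * (α^2 + β^2 + γ^2 - 1) = 0 := by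
        rw [hsph', hE']
        ring
      rcases mul_eq_zero.mp h0 with h | h
      · exact absurd h hne
      · linarith
    by_cases hαneg : α = -1
    · -- degenerate case: witness (0,1)
      have hb0 : β = 0 := by nlinarith [sq_nonneg β, sq_nonneg γ]
      have hg0 : γ = 0 := by nlinarith [sq_nonneg β, sq_nonneg γ]
      have hY : Y = 0 := by
        rw [hγ] at hg0
        field_simp at hg0
        simpa using hg0
      have hXZ1 : X + 1 - Z = 0 := by
        rw [hβ, hαneg] at hb0
        field_simp at hb0
        linarith
      have hXZ2 : 1 - X = 2*(1+t^2)*(1-Z) := by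
        rw [hα] at hαneg
        field_simp at hαneg
        linarith
      refine ⟨(WithLp.equiv 2 (Fin 2 → ℂ)).symm ![0, 1], ?_, ?_⟩
      · intro h
        have := congrArg (fun w => (WithLp.equiv 2 (Fin 2 → ℂ)) w 1) h
        simp at this
      · set v : EuclideanSpace ℂ (Fin 2) := (WithLp.equiv 2 (Fin 2 → ℂ)).symm ![0, 1] with hvdef
        have hc0 : v 0 = 0 := rfl
        have hc1 : v 1 = 1 := rfl
        have hN1 : ‖Matrix.toEuclideanLin !![(1:ℂ), 2*t; 0, -1] v‖ ^ 2 = 4*t^2 + 1 := by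
          rw [toEuc_apply, euclid_norm_sq]
          simp [hc0, hc1, Complex.normSq_apply]
          ring
        have hN2 : ‖v‖ ^ 2 = 1 := by
          rw [euclid_norm_sq, hc0, hc1]
          simp
        have hin : (inner ℂ v (Matrix.toEuclideanLin !![(1:ℂ), 2*t; 0, -1] v) : ℂ) = -1 := by
          rw [toEuc_apply, inner_two]
          simp [hc0, hc1]
        have hXv : X * (1+2*t^2) = -1 := by linear_combination (2*(1+t^2)) * hXZ1 + hXZ2
        have hZv : Z * (1+2*t^2) = 2*t^2 := by linear_combination hXv - (1+2*t^2) * hXZ1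
        rw [hN1, hN2, hin, Prod.mk.injEq, Prod.mk.injEq]
        have hden : (4*t^2 + 1 + 1) ≠ 0 := by positivity
        refine ⟨?_, ?_, ?_⟩
        · simp only [Complex.neg_re, Complex.one_re]
          rw [eq_div_iff hden]
          linear_combination 2 * hXv
        · simp [hY]
        · rw [eq_div_iff hden]
          linear_combination 2 * hZv
    · -- generic case
      have hα2 : α^2 ≤ 1 := by nlinarith [sq_nonneg β, sq_nonneg γ]
      have hα3 : -1 ≤ α := by nlinarith [sq_nonneg (α+1)]
      have hα4 : -1 < α := lt_of_le_of_ne hα3 (Ne.symm hαneg)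
      have h1α : (0:ℝ) < 1 + α := by linarith
      set a0 : ℝ := Real.sqrt ((1+α)/2) with ha0
      have ha0pos : 0 < a0 := Real.sqrt_pos.mpr (half_pos h1α)
      have ha0sq : a0^2 = (1+α)/2 := Real.sq_sqrt (half_pos h1α).le
      have ha0ne : a0 ≠ 0 := ha0pos.ne'
      set b : ℂ := ⟨β/(2*a0), γ/(2*a0)⟩ with hbdef
      refine ⟨(WithLp.equiv 2 (Fin 2 → ℂ)).symm ![(a0:ℂ), b], ?_, ?_⟩
      · intro h
        have h2 := congrArg (fun w => (WithLp.equiv 2 (Fin 2 → ℂ)) w 0) h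
        simp at h2
        exact ha0ne (by exact_mod_cast h2)
      · set v : EuclideanSpace ℂ (Fin 2) := (WithLp.equiv 2 (Fin 2 → ℂ)).symm ![(a0:ℂ), b] with hvdef
        have hc0 : v 0 = (a0:ℂ) := rfl
        have hc1 : v 1 = b := rfl
        have hbre : b.re = β/(2*a0) := rfl
        have hbim : b.im = γ/(2*a0) := rfl
        have hN2 : ‖v‖ ^ 2 = 1 := by
          rw [euclid_norm_sq, hc0, hc1]
          simp only [Complex.normSq_apply, Complex.ofReal_re, Complex.ofReal_im, hbre, hbim]
          field_simp
          linear_combination (4*a0^2 + 2*α - 2) * ha0sq + hsph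
        have hN1 : ‖Matrix.toEuclideanLin !![(1:ℂ), 2*t; 0, -1] v‖ ^ 2 =
            1 + 2*t*β + 2*t^2*(1-α) := by
          rw [toEuc_apply, euclid_norm_sq]
          simp only [WithLp.equiv_symm_apply, PiLp.toLp_apply, Matrix.cons_val_zero, Matrix.cons_val_one,
            Matrix.head_cons, hc0, hc1, Complex.normSq_apply, Complex.add_re, Complex.add_im,
            Complex.mul_re, Complex.mul_im, Complex.neg_re, Complex.neg_im, Complex.ofReal_re,
            Complex.ofReal_im, Complex.re_ofNat, Complex.im_ofNat, hbre, hbim]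
          field_simp
          linear_combination (4*a0^2 + 2*(1+α) - 4 - 8*t^2*(1-α)) * ha0sq + (4*t^2+1) * hsph
        have hre : (inner ℂ v (Matrix.toEuclideanLin !![(1:ℂ), 2*t; 0, -1] v) : ℂ).re =
            α + t*β := by
          rw [toEuc_apply, inner_two]
          simp only [WithLp.equiv_symm_apply, PiLp.toLp_apply, Matrix.cons_val_zero, Matrix.cons_val_one,
            Matrix.head_cons, hc0, hc1]
          simp only [Complex.add_re, Complex.mul_re, Complex.mul_im, Complex.conj_re,
            Complex.conj_im, Complex.neg_re, Complex.neg_im, Complex.add_im, Complex.ofReal_re,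
            Complex.ofReal_im, Complex.re_ofNat, Complex.im_ofNat, hbre, hbim]
          field_simp
          linear_combination (2*(2*a0^2-α+1)) * ha0sq - hsph
        have him : (inner ℂ v (Matrix.toEuclideanLin !![(1:ℂ), 2*t; 0, -1] v) : ℂ).im =
            t*γ := by
          rw [toEuc_apply, inner_two]
          simp only [WithLp.equiv_symm_apply, PiLp.toLp_apply, Matrix.cons_val_zero, Matrix.cons_val_one,
            Matrix.head_cons, hc0, hc1]
          simp only [Complex.add_re, Complex.mul_re, Complex.mul_im, Complex.conj_re,
            Complex.conj_im, Complex.neg_re, Complex.neg_im, Complex.add_im, Complex.ofReal_re,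
            Complex.ofReal_im, Complex.re_ofNat, Complex.im_ofNat, hbre, hbim]
          field_simp
          ring
        have hk : 1 + 2*t*β + 2*t^2*(1-α) + 1 = 2/(1-Z) := by
          rw [hβ, hα]
          field_simp
          ring
        have hkne : 1 + 2*t*β + 2*t^2*(1-α) + 1 ≠ 0 := by
          rw [hk]
          positivity
        rw [hN1, hN2, hre, him, Prod.mk.injEq, Prod.mk.injEq]
        refine ⟨?_, ?_, ?_⟩
        · rw [eq_div_iff hkne, hk, hβ]
          field_simp
          ring
        · rw [eq_div_iff hkne, hk, hγ]
          field_simp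
        · rw [eq_div_iff hkne, hk, hβ, hα]
          field_simp
          ring
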